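/- Let 𝒞 be a collection of cells over a field K and let 𝔭 be a minimal prime of the adjacent 2-minor ideal I_adj(𝒞). Then there exists an admissible set W of 𝒞 such that 𝔭 = P_W(𝒞) = (x_w : w ∈ W) + L_{𝒞_W}. -/

import Mathlib

open MvPolynomial

/-- The vertex set of the cell with lower-left corner `a`. -/
def cellVerts (a : ℤ × ℤ) : Finset (ℤ × ℤ) :=
  {a, a + (1, 0), a + (0, 1), a + (1, 1)}

/-- The edges of the cell with lower-left corner `a`, recorded as ordered pairs
of their two endpoints: `{a,c}`, `{c,b}`, `{b,d}`, `{a,d}` where `b = a+(1,1)`,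
`c = a+(0,1)`, `d = a+(1,0)`. -/
def cellEdges (a : ℤ × ℤ) : Finset ((ℤ × ℤ) × (ℤ × ℤ)) :=
  {(a, a + (0, 1)), (a + (0, 1), a + (1, 1)), (a + (1, 1), a + (1, 0)), (a, a + (1, 0))}

/-- The vertex set of a collection of cells; cells are recorded by their
lower-left corners. -/
def verts (C : Finset (ℤ × ℤ)) : Finset (ℤ × ℤ) :=
  C.biUnion cellVerts

lemma mem_verts {C : Finset (ℤ × ℤ)} {a v : ℤ × ℤ} (ha : a ∈ C)
    (hv : v ∈ cellVerts a) : v ∈ verts C :=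
  Finset.mem_biUnion.mpr ⟨a, ha, hv⟩

lemma corner_mem00 (a : ℤ × ℤ) : a ∈ cellVerts a := by simp [cellVerts]
lemma corner_mem10 (a : ℤ × ℤ) : a + (1, 0) ∈ cellVerts a := by simp [cellVerts]
lemma corner_mem01 (a : ℤ × ℤ) : a + (0, 1) ∈ cellVerts a := by simp [cellVerts]
lemma corner_mem11 (a : ℤ × ℤ) : a + (1, 1) ∈ cellVerts a := by simp [cellVerts]

/-- The adjacent 2-minor ideal `I_adj(𝒞)` of a collection of cells, inside the
polynomial ring `S_𝒞 = K[x_v : v ∈ V(𝒞)]`. -/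
noncomputable def adjIdeal (K : Type*) [Field K] (C : Finset (ℤ × ℤ)) :
    Ideal (MvPolynomial {v // v ∈ verts C} K) :=
  Ideal.span {f | ∃ a, ∃ ha : a ∈ C,
    f = X ⟨a, mem_verts ha (corner_mem00 a)⟩ *
          X ⟨a + (1, 1), mem_verts ha (corner_mem11 a)⟩ -
        X ⟨a + (0, 1), mem_verts ha (corner_mem01 a)⟩ *
          X ⟨a + (1, 0), mem_verts ha (corner_mem10 a)⟩}

/-- The vector `v_C = e_a + e_b - e_c - e_d ∈ ℤ^{V(𝒞)}` attached to the cell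
with lower-left corner `a` (so `b = a+(1,1)`, `c = a+(0,1)`, `d = a+(1,0)`). -/
def cellVec (C : Finset (ℤ × ℤ)) (a : ℤ × ℤ) : {v // v ∈ verts C} → ℤ :=
  fun w => ((if w.1 = a then 1 else 0) + (if w.1 = a + (1, 1) then 1 else 0)
    - (if w.1 = a + (0, 1) then 1 else 0)) - (if w.1 = a + (1, 0) then 1 else 0)

/-- The lattice `Λ_𝒟 ⊆ ℤ^{V(𝒞)}` generated by the vectors `v_C`, `C ∈ 𝒟`,
for a subcollection `𝒟` of `𝒞`. -/
def cellLattice (C : Finset (ℤ × ℤ)) (D : Set (ℤ × ℤ)) :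
    AddSubgroup ({v // v ∈ verts C} → ℤ) :=
  AddSubgroup.closure {g | ∃ a ∈ D, g = cellVec C a}

/-- The lattice ideal `L_𝒟 ⊆ S_𝒞` of a subcollection `𝒟` of `𝒞`. -/
noncomputable def latticeIdeal (K : Type*) [Field K] (C : Finset (ℤ × ℤ))
    (D : Set (ℤ × ℤ)) : Ideal (MvPolynomial {v // v ∈ verts C} K) :=
  Ideal.span {f | ∃ e ∈ cellLattice C D,
    f = (∏ w, X w ^ (e w).toNat) - ∏ w, X w ^ (-(e w)).toNat}

/-- `W ⊆ V(𝒞)` is admissible: for each cell `C ∈ 𝒞`, either `W ∩ C = ∅` or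
`W ∩ C` contains an edge of `C`. -/
def Admissible (C : Finset (ℤ × ℤ)) (W : Set (ℤ × ℤ)) : Prop :=
  W ⊆ ↑(verts C) ∧ ∀ a ∈ C, (∀ v ∈ cellVerts a, v ∉ W) ∨
    ∃ e ∈ cellEdges a, e.1 ∈ W ∧ e.2 ∈ W

/-- The subcollection `𝒞_W` of cells of `𝒞` disjoint from `W`. -/
def subcollW (C : Finset (ℤ × ℤ)) (W : Set (ℤ × ℤ)) : Set (ℤ × ℤ) :=
  {a | a ∈ C ∧ ∀ v ∈ cellVerts a, v ∉ W}

/-- The ideal `P_W(𝒞) = (x_w : w ∈ W) + L_{𝒞_W}`. -/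
noncomputable def PW (K : Type*) [Field K] (C : Finset (ℤ × ℤ))
    (W : Set (ℤ × ℤ)) : Ideal (MvPolynomial {v // v ∈ verts C} K) :=
  Ideal.span {f | ∃ v : {v // v ∈ verts C}, v.1 ∈ W ∧ f = X v} +
    latticeIdeal K C (subcollW C W)

/-- The height of an ideal: the infimum of `Order.height 𝔭` over the prime
ideals `𝔭` containing it (equivalently, over its minimal primes); for a prime
ideal this is just its height. -/
noncomputable def idealHeight {R : Type*} [CommRing R] (I : Ideal R) : ℕ∞ :=
  ⨅ p ∈ {p : PrimeSpectrum R | I ≤ p.asIdeal}, Order.height p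

/-- A collection of cells is weakly connected if any two of its cells are
joined by a sequence of cells of the collection in which consecutive cells
share at least one vertex. -/
def WeaklyConnected (C : Finset (ℤ × ℤ)) : Prop :=
  ∀ a ∈ C, ∀ b ∈ C, Relation.ReflTransGen
    (fun p q => p ∈ C ∧ q ∈ C ∧ ((cellVerts p ∩ cellVerts q).Nonempty)) a b

/-- `𝒞` contains a square tetromino. -/
def HasSquareTetromino (C : Finset (ℤ × ℤ)) : Prop :=
  ∃ a : ℤ × ℤ, a ∈ C ∧ a + (1, 0) ∈ C ∧ a + (0, 1) ∈ C ∧ a + (1, 1) ∈ C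

/-- `𝒞` contains an X-pentomino. -/
def HasXPentomino (C : Finset (ℤ × ℤ)) : Prop :=
  ∃ a : ℤ × ℤ, a ∈ C ∧ a + (1, 0) ∈ C ∧ a - (1, 0) ∈ C ∧
    a + (0, 1) ∈ C ∧ a - (0, 1) ∈ C

/-- Row convexity of a collection of cells. -/
def RowConvex (C : Finset (ℤ × ℤ)) : Prop :=
  ∀ a ∈ C, ∀ b ∈ C, a.2 = b.2 → ∀ r : ℤ, a.1 ≤ r → r ≤ b.1 → (r, a.2) ∈ C

/-- Column convexity of a collection of cells. -/
def ColConvex (C : Finset (ℤ × ℤ)) : Prop :=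
  ∀ a ∈ C, ∀ b ∈ C, a.1 = b.1 → ∀ s : ℤ, a.2 ≤ s → s ≤ b.2 → (a.1, s) ∈ C


/- ========================= auxiliary development ========================= -/

namespace Stmt6Aux

open Finset

variable {K : Type*} [Field K] {C : Finset (ℤ × ℤ)}

/-- Abbreviation for the vertex type. -/
abbrev Vx (C : Finset (ℤ × ℤ)) := {v // v ∈ verts C}

/-- The binomial attached to an integer vector. -/
noncomputable def binom (K : Type*) [Field K] (C : Finset (ℤ × ℤ)) (e : Vx C → ℤ) :
    MvPolynomial (Vx C) K :=
  (∏ w, X w ^ (e w).toNat) - ∏ w, X w ^ (-(e w)).toNat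

lemma latticeIdeal_eq (D : Set (ℤ × ℤ)) :
    latticeIdeal K C D = Ideal.span {f | ∃ e ∈ cellLattice C D, f = binom K C e} := rfl

/-- positive part of a vector as a Finsupp -/
noncomputable def pp (C : Finset (ℤ × ℤ)) (e : Vx C → ℤ) : Vx C →₀ ℕ :=
  Finsupp.equivFunOnFinite.symm (fun w => (e w).toNat)

lemma pp_apply (e : Vx C → ℤ) (w : Vx C) : pp C e w = (e w).toNat :=
  rfl

lemma prod_univ_X_pow (k : Vx C →₀ ℕ) :
    (∏ w, (X w : MvPolynomial (Vx C) K) ^ k w) = monomial k 1 := by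
  classical
  rw [← prod_X_pow_eq_monomial]
  exact (Finset.prod_subset (Finset.subset_univ _) (by
    intro x _ hx
    rw [Finsupp.notMem_support_iff.mp hx, pow_zero])).symm

lemma binom_eq (e : Vx C → ℤ) :
    binom K C e = monomial (pp C e) 1 - monomial (pp C (-e)) 1 := by
  rw [binom, ← prod_univ_X_pow (K := K) (pp C e), ← prod_univ_X_pow (K := K) (pp C (-e))]
  congr 1 <;> exact Finset.prod_congr rfl fun w _ => by simp [pp_apply]

lemma prod_pow_indicator {σ : Type*} [Fintype σ] [DecidableEq σ] (A B : σ) (f : σ → ℕ)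
    (hAB : A ≠ B) (hf : ∀ w, f w = (if w = A then 1 else 0) + (if w = B then 1 else 0)) :
    (∏ w, (X w : MvPolynomial σ K) ^ f w) = X A * X B := by
  have h1 : ∀ J : σ, (∏ w, (X w : MvPolynomial σ K) ^ (if w = J then 1 else 0)) = X J := by
    intro J
    rw [Finset.prod_congr rfl (fun w _ => show (X w : MvPolynomial σ K) ^ (if w = J then 1 else 0)
        = if w = J then X w else 1 by split_ifs <;> simp)]
    simp [Finset.prod_ite_eq']
  calc (∏ w, (X w : MvPolynomial σ K) ^ f w)
      = ∏ w, ((X w : MvPolynomial σ K) ^ (if w = A then 1 else 0)) *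
          (X w ^ (if w = B then 1 else 0)) := by
        exact Finset.prod_congr rfl fun w _ => by rw [hf, pow_add]
    _ = X A * X B := by rw [Finset.prod_mul_distrib, h1, h1]

lemma cell_corners_ne (a : ℤ × ℤ) :
    a ≠ a + (1, 1) ∧ a ≠ a + (0, 1) ∧ a ≠ a + (1, 0) ∧ a + (1, 1) ≠ a + (0, 1) ∧
      a + (1, 1) ≠ a + (1, 0) ∧ a + (0, 1) ≠ a + (1, 0) := by
  refine ⟨?_, ?_, ?_, ?_, ?_, ?_⟩ <;> simp [Prod.ext_iff] <;> omega

lemma binom_cellVec {a : ℤ × ℤ} (ha : a ∈ C) :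
    binom K C (cellVec C a) =
      X (⟨a, mem_verts ha (corner_mem00 a)⟩ : Vx C) *
          X ⟨a + (1, 1), mem_verts ha (corner_mem11 a)⟩ -
        X (⟨a + (0, 1), mem_verts ha (corner_mem01 a)⟩ : Vx C) *
          X ⟨a + (1, 0), mem_verts ha (corner_mem10 a)⟩ := by
  classical
  obtain ⟨h1, h2, h3, h4, h5, h6⟩ := cell_corners_ne a
  rw [binom]
  congr 1
  · refine prod_pow_indicator _ _ _ (by simp [Subtype.ext_iff, Prod.ext_iff]) fun w => ?_
    rcases w with ⟨w, hw⟩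
    simp only [cellVec, Subtype.mk.injEq]
    split_ifs <;> simp_all [Prod.ext_iff] <;> omega
  · refine prod_pow_indicator _ _ _ (by simp [Subtype.ext_iff, Prod.ext_iff]) fun w => ?_
    rcases w with ⟨w, hw⟩
    simp only [cellVec, Subtype.mk.injEq]
    split_ifs <;> simp_all [Prod.ext_iff] <;> omega

lemma cellVec_mem_lattice {D : Set (ℤ × ℤ)} {a : ℤ × ℤ} (haD : a ∈ D) :
    cellVec C a ∈ cellLattice C D :=
  AddSubgroup.subset_closure ⟨a, haD, rfl⟩

lemma binom_mem_latticeIdeal {D : Set (ℤ × ℤ)} {e : Vx C → ℤ} (he : e ∈ cellLattice C D) :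
    binom K C e ∈ latticeIdeal K C D :=
  Ideal.subset_span ⟨e, he, rfl⟩

lemma cellLattice_eq_span (D : Set (ℤ × ℤ)) :
    cellLattice C D = (Submodule.span ℤ (cellVec C '' D)).toAddSubgroup := by
  have hset : {g | ∃ a ∈ D, g = cellVec C a} = cellVec C '' D := by
    ext g
    exact ⟨fun ⟨a, h, e⟩ => ⟨a, h, e.symm⟩, fun ⟨a, h, e⟩ => ⟨a, h, e.symm⟩⟩
  rw [Submodule.span_int_eq_addSubgroupClosure, cellLattice, hset]

/-- support of lattice elements lies in the vertices of the subcollection. -/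
lemma lattice_support {D : Set (ℤ × ℤ)} {e : Vx C → ℤ} (he : e ∈ cellLattice C D)
    (w : Vx C) (hw : e w ≠ 0) : ∃ a ∈ D, w.1 ∈ cellVerts a := by
  induction he using AddSubgroup.closure_induction generalizing w with
  | mem g hg =>
    obtain ⟨a, haD, rfl⟩ := hg
    refine ⟨a, haD, ?_⟩
    by_contra h
    simp only [cellVerts, Finset.mem_insert, Finset.mem_singleton, not_or] at h
    obtain ⟨n1, n2, n3, n4⟩ := h
    apply hw
    simp only [cellVec]
    rw [if_neg n1, if_neg n4, if_neg n3, if_neg n2]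
    norm_num
  | zero => exact absurd rfl hw
  | add g g' hg hg' ihg ihg' =>
    by_cases h : g w = 0
    · exact ihg' w (by simpa [h] using hw)
    · exact ihg w h
  | neg g hg ihg => exact ihg w (by simpa using hw)

/-- binomials of lattice vectors supported away from a prime containing the adjacent
minors lie in the prime. -/
lemma lattice_binom_mem_prime (p : Ideal (MvPolynomial (Vx C) K)) [hp : p.IsPrime]
    (hIp : adjIdeal K C ≤ p) {D : Set (ℤ × ℤ)} (hD : ∀ a ∈ D, a ∈ C)
    (hDW : ∀ a ∈ D, ∀ w : Vx C, w.1 ∈ cellVerts a → X w ∉ p)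
    {e : Vx C → ℤ} (he : e ∈ cellLattice C D) : binom K C e ∈ p := by
  have hsupp : ∀ {g : Vx C → ℤ}, g ∈ cellLattice C D → ∀ w : Vx C, g w ≠ 0 → X w ∉ p := by
    intro g hg w hw
    obtain ⟨a, haD, hv⟩ := lattice_support hg w hw
    exact hDW a haD w hv
  induction he using AddSubgroup.closure_induction with
  | mem g hg =>
    obtain ⟨a, haD, rfl⟩ := hg
    rw [binom_cellVec (hD a haD)]
    exact hIp (Ideal.subset_span ⟨a, hD a haD, rfl⟩)
  | zero => simp [binom]
  | add x y hx hy ihx ihy =>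
    have hxs := hsupp hx
    have hys := hsupp hy
    set c : Vx C → ℕ := fun w => (x w).toNat + (y w).toNat - (x w + y w).toNat with hc
    have idA : ∀ w : Vx C, (x w).toNat + (y w).toNat = (x w + y w).toNat + c w := by
      intro w; simp only [hc]; omega
    have idB : ∀ w : Vx C, (-(x w)).toNat + (-(y w)).toNat = (-(x w + y w)).toNat + c w := by
      intro w; simp only [hc]; omega
    have e1 : (∏ w, (X w : MvPolynomial (Vx C) K) ^ (x w).toNat) *
        (∏ w, (X w : MvPolynomial (Vx C) K) ^ (y w).toNat) =
        (∏ w, (X w : MvPolynomial (Vx C) K) ^ ((x + y) w).toNat) *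
          ∏ w, (X w : MvPolynomial (Vx C) K) ^ c w := by
      rw [← Finset.prod_mul_distrib, ← Finset.prod_mul_distrib]
      exact Finset.prod_congr rfl fun w _ => by
        rw [← pow_add, ← pow_add, Pi.add_apply, idA]
    have e2 : (∏ w, (X w : MvPolynomial (Vx C) K) ^ (-(x w)).toNat) *
        (∏ w, (X w : MvPolynomial (Vx C) K) ^ (-(y w)).toNat) =
        (∏ w, (X w : MvPolynomial (Vx C) K) ^ (-((x + y) w)).toNat) *
          ∏ w, (X w : MvPolynomial (Vx C) K) ^ c w := by
      rw [← Finset.prod_mul_distrib, ← Finset.prod_mul_distrib]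
      exact Finset.prod_congr rfl fun w _ => by
        rw [← pow_add, ← pow_add, Pi.add_apply, idB]
    have hmem : (∏ w, (X w : MvPolynomial (Vx C) K) ^ c w) * binom K C (x + y) ∈ p := by
      have hid : (∏ w, (X w : MvPolynomial (Vx C) K) ^ c w) * binom K C (x + y) =
          (∏ w, (X w : MvPolynomial (Vx C) K) ^ (y w).toNat) * binom K C x +
            (∏ w, (X w : MvPolynomial (Vx C) K) ^ (-(x w)).toNat) * binom K C y := by
        simp only [binom]
        linear_combination e2 - e1
      rw [hid]
      exact p.add_mem (p.mul_mem_left _ ihx) (p.mul_mem_left _ ihy)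
    rcases hp.mem_or_mem hmem with hcp | hb
    · exfalso
      obtain ⟨w, -, hw⟩ := Ideal.IsPrime.prod_mem_iff.mp hcp
      have hcw : c w ≠ 0 := by
        intro h0
        rw [h0, pow_zero] at hw
        exact hp.ne_top (Ideal.eq_top_iff_one _ |>.mpr hw)
      have hXw : X w ∈ p := hp.mem_of_pow_mem _ hw
      have : x w ≠ 0 ∨ y w ≠ 0 := by
        by_contra h
        push_neg at h
        simp only [hc, h.1, h.2] at hcw
        omega
      rcases this with h | h
      · exact hxs w h hXw
      · exact hys w h hXw
    · exact hb
  | neg x hx ihx =>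
    have : binom K C (-x) = -binom K C x := by
      simp only [binom, Pi.neg_apply, neg_neg, neg_sub]
    rw [this]
    exact p.neg_mem ihx

/-- The candidate admissible set attached to a prime. -/
def Wset (C : Finset (ℤ × ℤ)) (p : Ideal (MvPolynomial (Vx C) K)) : Set (ℤ × ℤ) :=
  {v | ∃ h : v ∈ verts C, X (⟨v, h⟩ : Vx C) ∈ p}

lemma span_vars_le_PW (W : Set (ℤ × ℤ)) :
    Ideal.span {f | ∃ v : Vx C, v.1 ∈ W ∧ f = (X v : MvPolynomial (Vx C) K)} ≤ PW K C W := by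
  rw [PW, Submodule.add_eq_sup]
  exact le_sup_left

lemma latticeIdeal_le_PW (W : Set (ℤ × ℤ)) :
    latticeIdeal K C (subcollW C W) ≤ PW K C W := by
  rw [PW, Submodule.add_eq_sup]
  exact le_sup_right

lemma X_mem_PW {W : Set (ℤ × ℤ)} {v : ℤ × ℤ} (hv : v ∈ verts C) (hvW : v ∈ W) :
    (X (⟨v, hv⟩ : Vx C) : MvPolynomial (Vx C) K) ∈ PW K C W :=
  span_vars_le_PW W (Ideal.subset_span ⟨⟨v, hv⟩, hvW, rfl⟩)

lemma admissible_Wset (p : Ideal (MvPolynomial (Vx C) K)) [hp : p.IsPrime]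
    (hIp : adjIdeal K C ≤ p) : Admissible C (Wset C p) := by
  constructor
  · intro v hv
    exact hv.1
  · intro a ha
    by_cases hall : ∀ v ∈ cellVerts a, v ∉ Wset C p
    · exact Or.inl hall
    · right
      push_neg at hall
      obtain ⟨v, hv, hvW⟩ := hall
      have hA := mem_verts ha (corner_mem00 a)
      have hB := mem_verts ha (corner_mem11 a)
      have hCc := mem_verts ha (corner_mem01 a)
      have hDd := mem_verts ha (corner_mem10 a)
      have hminor : (X (⟨a, hA⟩ : Vx C) : MvPolynomial (Vx C) K) * X ⟨a + (1, 1), hB⟩ -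
          X ⟨a + (0, 1), hCc⟩ * X ⟨a + (1, 0), hDd⟩ ∈ p := hIp (Ideal.subset_span ⟨a, ha, rfl⟩)
      simp only [cellVerts, Finset.mem_insert, Finset.mem_singleton] at hv
      rcases hv with h | h | h | h <;> rw [h] at hvW <;> obtain ⟨hv', hX⟩ := hvW
      · -- v = a
        have hcd : (X (⟨a + (0, 1), hCc⟩ : Vx C) : MvPolynomial (Vx C) K) *
            X ⟨a + (1, 0), hDd⟩ ∈ p := by
          have h1 : (X (⟨a, hA⟩ : Vx C) : MvPolynomial (Vx C) K) * X ⟨a + (1, 1), hB⟩ ∈ p :=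
            p.mul_mem_right _ hX
          have := p.sub_mem h1 hminor
          simpa using this
        rcases hp.mem_or_mem hcd with h | h
        · exact ⟨(a, a + (0, 1)), by simp [cellEdges], ⟨hv', hX⟩, ⟨hCc, h⟩⟩
        · exact ⟨(a, a + (1, 0)), by simp [cellEdges], ⟨hv', hX⟩, ⟨hDd, h⟩⟩
      · -- v = a + (1,0)
        have hab : (X (⟨a, hA⟩ : Vx C) : MvPolynomial (Vx C) K) * X ⟨a + (1, 1), hB⟩ ∈ p := by
          have h1 : (X (⟨a + (0, 1), hCc⟩ : Vx C) : MvPolynomial (Vx C) K) *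
              X ⟨a + (1, 0), hDd⟩ ∈ p := p.mul_mem_left _ hX
          have := p.add_mem hminor h1
          simpa using this
        rcases hp.mem_or_mem hab with h | h
        · exact ⟨(a, a + (1, 0)), by simp [cellEdges], ⟨hA, h⟩, ⟨hv', hX⟩⟩
        · exact ⟨(a + (1, 1), a + (1, 0)), by simp [cellEdges], ⟨hB, h⟩, ⟨hv', hX⟩⟩
      · -- v = a + (0,1)
        have hab : (X (⟨a, hA⟩ : Vx C) : MvPolynomial (Vx C) K) * X ⟨a + (1, 1), hB⟩ ∈ p := by
          have h1 : (X (⟨a + (0, 1), hCc⟩ : Vx C) : MvPolynomial (Vx C) K) *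
              X ⟨a + (1, 0), hDd⟩ ∈ p := p.mul_mem_right _ hX
          have := p.add_mem hminor h1
          simpa using this
        rcases hp.mem_or_mem hab with h | h
        · exact ⟨(a, a + (0, 1)), by simp [cellEdges], ⟨hA, h⟩, ⟨hv', hX⟩⟩
        · exact ⟨(a + (0, 1), a + (1, 1)), by simp [cellEdges], ⟨hv', hX⟩, ⟨hB, h⟩⟩
      · -- v = a + (1,1)
        have hcd : (X (⟨a + (0, 1), hCc⟩ : Vx C) : MvPolynomial (Vx C) K) *
            X ⟨a + (1, 0), hDd⟩ ∈ p := by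
          have h1 : (X (⟨a, hA⟩ : Vx C) : MvPolynomial (Vx C) K) * X ⟨a + (1, 1), hB⟩ ∈ p :=
            p.mul_mem_left _ hX
          have := p.sub_mem h1 hminor
          simpa using this
        rcases hp.mem_or_mem hcd with h | h
        · exact ⟨(a + (0, 1), a + (1, 1)), by simp [cellEdges], ⟨hCc, h⟩, ⟨hv', hX⟩⟩
        · exact ⟨(a + (1, 1), a + (1, 0)), by simp [cellEdges], ⟨hv', hX⟩, ⟨hDd, h⟩⟩

lemma adj_le_PW {W : Set (ℤ × ℤ)} (hW : Admissible C W) :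
    adjIdeal K C ≤ PW K C W := by
  rw [adjIdeal, Ideal.span_le]
  rintro f ⟨a, ha, rfl⟩
  have hA := mem_verts ha (corner_mem00 a)
  have hB := mem_verts ha (corner_mem11 a)
  have hCc := mem_verts ha (corner_mem01 a)
  have hDd := mem_verts ha (corner_mem10 a)
  by_cases hcell : ∀ v ∈ cellVerts a, v ∉ W
  · have hmem : binom K C (cellVec C a) ∈ latticeIdeal K C (subcollW C W) :=
      binom_mem_latticeIdeal (cellVec_mem_lattice ⟨ha, hcell⟩)
    rw [binom_cellVec ha] at hmem
    exact latticeIdeal_le_PW W hmem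
  · rcases hW.2 a ha with h | ⟨e, he, h1, h2⟩
    · exact absurd h hcell
    · simp only [cellEdges, Finset.mem_insert, Finset.mem_singleton] at he
      rcases he with rfl | rfl | rfl | rfl
      · exact Submodule.sub_mem _ (Ideal.mul_mem_right _ _ (X_mem_PW hA h1))
          (Ideal.mul_mem_right _ _ (X_mem_PW hCc h2))
      · exact Submodule.sub_mem _ (Ideal.mul_mem_left _ _ (X_mem_PW hB h2))
          (Ideal.mul_mem_right _ _ (X_mem_PW hCc h1))
      · exact Submodule.sub_mem _ (Ideal.mul_mem_left _ _ (X_mem_PW hB h1))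
          (Ideal.mul_mem_left _ _ (X_mem_PW hDd h2))
      · exact Submodule.sub_mem _ (Ideal.mul_mem_right _ _ (X_mem_PW hA h1))
          (Ideal.mul_mem_left _ _ (X_mem_PW hDd h2))

lemma PW_le_p (p : Ideal (MvPolynomial (Vx C) K)) [hp : p.IsPrime]
    (hIp : adjIdeal K C ≤ p) : PW K C (Wset C p) ≤ p := by
  rw [PW, Submodule.add_eq_sup, sup_le_iff]
  constructor
  · rw [Ideal.span_le]
    rintro f ⟨v, hvW, rfl⟩
    obtain ⟨h, hX⟩ := hvW
    exact hX
  · rw [latticeIdeal_eq, Ideal.span_le]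
    rintro f ⟨e, he, rfl⟩
    exact lattice_binom_mem_prime p hIp (fun a h => h.1)
      (fun a haD w hw hXw => haD.2 w.1 hw ⟨w.2, hXw⟩) he

/-- saturation of the cell lattice. -/
lemma lattice_saturated {D : Set (ℤ × ℤ)} (hD : ∀ a ∈ D, a ∈ C)
    {x : Vx C → ℤ} {n : ℤ} (hn : n ≠ 0) (h : n • x ∈ cellLattice C D) :
    x ∈ cellLattice C D := by
  classical
  rw [cellLattice_eq_span, Submodule.mem_toAddSubgroup,
    Finsupp.mem_span_image_iff_linearCombination] at h ⊢
  obtain ⟨l, hl, hsum⟩ := h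
  rw [Finsupp.mem_supported] at hl
  obtain ⟨M, hM⟩ := (l.support.image fun a => a.1 + a.2).exists_le
  have hMs : ∀ a ∈ l.support, a.1 + a.2 ≤ M := fun a ha =>
    hM _ (Finset.mem_image_of_mem _ ha)
  have hsum' : ∀ t : ℤ × ℤ, (∑ a' ∈ l.support, l a' * (if a' = t then (1 : ℤ) else 0)) = l t := by
    intro t
    rw [Finset.sum_congr rfl (fun a' _ => by rw [mul_ite, mul_one, mul_zero]),
      Finset.sum_ite_eq' l.support t l]
    split_ifs with h
    · rfl
    · exact (Finsupp.notMem_support_iff.mp h).symm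
  have heval : ∀ (a : ℤ × ℤ) (haC : a ∈ C),
      l (a + (1, 1)) + l a - l (a + (1, 0)) - l (a + (0, 1)) =
        n * x ⟨a + (1, 1), mem_verts haC (corner_mem11 a)⟩ := by
    intro a haC
    set A : Vx C := ⟨a + (1, 1), mem_verts haC (corner_mem11 a)⟩ with hA
    have hcv : ∀ a' : ℤ × ℤ, cellVec C a' A =
        ((if a' = a + (1, 1) then (1 : ℤ) else 0) + (if a' = a then 1 else 0)
          - (if a' = a + (1, 0) then 1 else 0)) - (if a' = a + (0, 1) then 1 else 0) := by
      intro a'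
      have e1 : (a + (1, 1) = a') ↔ (a' = a + (1, 1)) := eq_comm
      have e2 : (a + (1, 1) = a' + (1, 1)) ↔ (a' = a) := by
        constructor <;> intro h
        · exact (add_left_injective _ h).symm
        · rw [h]
      have e3 : (a + (1, 1) = a' + (0, 1)) ↔ (a' = a + (1, 0)) := by
        simp only [Prod.ext_iff, Prod.fst_add, Prod.snd_add]
        omega
      have e4 : (a + (1, 1) = a' + (1, 0)) ↔ (a' = a + (0, 1)) := by
        simp only [Prod.ext_iff, Prod.fst_add, Prod.snd_add]
        omega
      show ((if (a + (1, 1) : ℤ × ℤ) = a' then (1 : ℤ) else 0)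
          + (if (a + (1, 1) : ℤ × ℤ) = a' + (1, 1) then (1 : ℤ) else 0)
          - (if (a + (1, 1) : ℤ × ℤ) = a' + (0, 1) then (1 : ℤ) else 0))
          - (if (a + (1, 1) : ℤ × ℤ) = a' + (1, 0) then (1 : ℤ) else 0) = _
      rw [if_congr e1 rfl rfl, if_congr e2 rfl rfl, if_congr e3 rfl rfl, if_congr e4 rfl rfl]
    have h0 : (Finsupp.linearCombination ℤ (cellVec C)) l A = (n • x) A := by rw [hsum]
    rw [Finsupp.linearCombination_apply, Finsupp.sum, Finset.sum_apply] at h0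
    have hre : (∑ a' ∈ l.support, (l a' • cellVec C a') A) =
        l (a + (1, 1)) + l a - l (a + (1, 0)) - l (a + (0, 1)) := by
      calc (∑ a' ∈ l.support, (l a' • cellVec C a') A)
          = ∑ a' ∈ l.support, ((l a' * (if a' = a + (1, 1) then (1 : ℤ) else 0)
              + l a' * (if a' = a then 1 else 0)
              - l a' * (if a' = a + (1, 0) then 1 else 0))
              - l a' * (if a' = a + (0, 1) then 1 else 0)) := by
            refine Finset.sum_congr rfl fun a' _ => ?_
            rw [Pi.smul_apply, smul_eq_mul, hcv a']
            ring
        _ = l (a + (1, 1)) + l a - l (a + (1, 0)) - l (a + (0, 1)) := by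
            rw [Finset.sum_sub_distrib, Finset.sum_sub_distrib, Finset.sum_add_distrib,
              hsum', hsum', hsum', hsum']
    rw [hre] at h0
    rw [h0, Pi.smul_apply, smul_eq_mul]
  have hdvd : ∀ k : ℕ, ∀ a : ℤ × ℤ, M < a.1 + a.2 + k → n ∣ l a := by
    intro k
    induction k with
    | zero =>
      intro a ha
      have : a ∉ l.support := fun hs => by
        have := hMs a hs
        omega
      rw [Finsupp.notMem_support_iff.mp this]
      exact dvd_zero n
    | succ k ih =>
      intro a ha
      by_cases hs : a ∈ l.support
      · have haC : a ∈ C := hD a (hl hs)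
        have heq := heval a haC
        have d1 : n ∣ l (a + (1, 1)) := ih _ (by simp only [Prod.fst_add, Prod.snd_add]; omega)
        have d2 : n ∣ l (a + (1, 0)) := ih _ (by simp only [Prod.fst_add, Prod.snd_add]; omega)
        have d3 : n ∣ l (a + (0, 1)) := ih _ (by simp only [Prod.fst_add, Prod.snd_add]; omega)
        obtain ⟨c1, hc1⟩ := d1
        obtain ⟨c2, hc2⟩ := d2
        obtain ⟨c3, hc3⟩ := d3
        exact ⟨x ⟨a + (1, 1), mem_verts haC (corner_mem11 a)⟩ - c1 + c2 + c3, by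
          linear_combination heq - hc1 + hc2 + hc3⟩
      · rw [Finsupp.notMem_support_iff.mp hs]
        exact dvd_zero n
  have hall : ∀ a : ℤ × ℤ, n ∣ l a := fun a =>
    hdvd (M + 1 - (a.1 + a.2)).toNat a (by omega)
  refine ⟨Finsupp.mapRange (· / n) (by simp) l, ?_, ?_⟩
  · rw [Finsupp.mem_supported]
    exact subset_trans (Finset.coe_subset.mpr Finsupp.support_mapRange) hl
  · have hx : n • (Finsupp.linearCombination ℤ (cellVec C))
        (Finsupp.mapRange (· / n) (by simp) l) = n • x := by
      rw [← hsum, ← map_smul]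
      congr 1
      ext a
      rw [Finsupp.smul_apply, Finsupp.mapRange_apply, smul_eq_mul,
        Int.mul_ediv_cancel' (hall a)]
    exact smul_right_injective _ hn hx
/-- generic kernel inclusion lemma. -/
lemma ker_le {σ : Type*} [Fintype σ] {G : Type*} [AddCommGroup G]
    (Pv : σ → Prop) (gs : (σ →₀ ℕ) → G) (J : Ideal (MvPolynomial σ K))
    (φ : MvPolynomial σ K →ₐ[K] AddMonoidAlgebra K G)
    (hmono : ∀ u : σ →₀ ℕ, (∀ v ∈ u.support, ¬ Pv v) →
      φ (monomial u 1) = AddMonoidAlgebra.single (gs u) 1)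
    (hmono0 : ∀ u : σ →₀ ℕ, (∃ v ∈ u.support, Pv v) → φ (monomial u 1) = 0)
    (hvar : ∀ u : σ →₀ ℕ, (∃ v ∈ u.support, Pv v) → monomial u (1 : K) ∈ J)
    (hbin : ∀ u u' : σ →₀ ℕ, (∀ v ∈ u.support, ¬ Pv v) → (∀ v ∈ u'.support, ¬ Pv v) →
      gs u = gs u' → monomial u (1 : K) - monomial u' 1 ∈ J) :
    ∀ f, φ f = 0 → f ∈ J := by
  classical
  suffices H : ∀ (N : ℕ) (f : MvPolynomial σ K), f.support.card ≤ N → φ f = 0 → f ∈ J by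
    intro f hf
    exact H f.support.card f le_rfl hf
  intro N
  induction N with
  | zero =>
    intro f hcard _
    have : f = 0 := support_eq_empty.mp (Finset.card_eq_zero.mp (Nat.le_zero.mp hcard))
    rw [this]
    exact J.zero_mem
  | succ N ih =>
    intro f hcard hf
    by_cases h0 : f = 0
    · rw [h0]; exact J.zero_mem
    obtain ⟨u, hu⟩ := support_nonempty.mpr h0
    have hcu : coeff u f ≠ 0 := mem_support_iff.mp hu
    by_cases hW : ∀ v ∈ u.support, ¬ Pv v
    · -- u is off the variable set: find a partner monomial
      have hphi : φ f = ∑ w ∈ f.support, coeff w f • φ (monomial w 1) := by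
        conv_lhs => rw [f.as_sum]
        rw [map_sum]
        refine Finset.sum_congr rfl fun w _ => ?_
        rw [show monomial w (coeff w f) = coeff w f • monomial w (1 : K) by
          rw [smul_monomial, smul_eq_mul, mul_one], map_smul]
      have happ : ∀ γ : G, (0 : K) = ∑ w ∈ f.support, coeff w f * ((φ (monomial w 1)).coeff γ) := by
        intro γ
        have h1 : (φ f).coeff γ = 0 := by rw [hf]; rfl
        rw [hphi] at h1
        rw [← h1, AddMonoidAlgebra.coeff_sum, Finset.sum_apply']
        exact (Finset.sum_congr rfl fun w _ => by rw [AddMonoidAlgebra.coeff_smul, Finsupp.smul_apply, smul_eq_mul]).symm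
      set γ := gs u with hγ
      have hterm : ∀ w : σ →₀ ℕ, coeff w f * ((φ (monomial w 1)).coeff γ) =
          if (∀ v ∈ w.support, ¬ Pv v) ∧ gs w = γ then coeff w f else 0 := by
        intro w
        by_cases hw : ∀ v ∈ w.support, ¬ Pv v
        · rw [hmono w hw, AddMonoidAlgebra.coeff_single, Finsupp.single_apply]
          by_cases hgw : gs w = γ
          · rw [if_pos hgw, if_pos ⟨hw, hgw⟩, mul_one]
          · rw [if_neg hgw, if_neg (fun hc => hgw hc.2), mul_zero]
        · rw [hmono0 w (by push_neg at hw; exact hw)]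
          rw [if_neg (fun hc => hw hc.1)]
          simp
      have hzero : (∑ w ∈ f.support.filter (fun w => (∀ v ∈ w.support, ¬ Pv v) ∧ gs w = γ),
          coeff w f) = 0 := by
        rw [Finset.sum_filter, ← Finset.sum_congr rfl fun w _ => hterm w]
        exact (happ γ).symm
      have huT : u ∈ f.support.filter (fun w => (∀ v ∈ w.support, ¬ Pv v) ∧ gs w = γ) :=
        Finset.mem_filter.mpr ⟨hu, hW, rfl⟩
      have hex : ∃ u' ∈ f.support.filter (fun w => (∀ v ∈ w.support, ¬ Pv v) ∧ gs w = γ),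
          u' ≠ u := by
        by_contra hno
        push_neg at hno
        have hsingle : f.support.filter (fun w => (∀ v ∈ w.support, ¬ Pv v) ∧ gs w = γ) = {u} :=
          Finset.eq_singleton_iff_unique_mem.mpr ⟨huT, hno⟩
        rw [hsingle, Finset.sum_singleton] at hzero
        exact hcu hzero
      obtain ⟨u', hu'T, hne⟩ := hex
      have hmf := Finset.mem_filter.mp hu'T
      have hu'mem := hmf.1
      have hw' := hmf.2.1
      have hγ' := hmf.2.2
      have hbinmem : monomial u (1 : K) - monomial u' 1 ∈ J := hbin u u' hW hw' hγ'.symm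
      set f' := f - C (coeff u f) * (monomial u 1 - monomial u' 1) with hf'
      have hφf' : φ f' = 0 := by
        rw [hf', map_sub, map_mul, map_sub, hmono u hW, hmono u' hw', hγ', ← hγ, sub_self,
          mul_zero, sub_zero, hf]
      have hsupp' : f'.support ⊆ f.support.erase u := by
        intro w hw
        rw [Finset.mem_erase]
        have hwne : coeff w f' ≠ 0 := mem_support_iff.mp hw
        constructor
        · rintro rfl
          apply hwne
          rw [hf', coeff_sub, coeff_C_mul, coeff_sub, coeff_monomial, coeff_monomial,
            if_pos rfl, if_neg hne]
          ring
        · by_contra hnf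
          apply hwne
          have hcwf : coeff w f = 0 := notMem_support_iff.mp hnf
          have hwu' : w ≠ u' := fun h => hnf (h ▸ hu'mem)
          have hwu : w ≠ u := fun h => hnf (h ▸ hu)
          rw [hf', coeff_sub, coeff_C_mul, coeff_sub, coeff_monomial, coeff_monomial,
            if_neg (fun h => hwu h.symm), if_neg (fun h => hwu' h.symm), hcwf]
          ring
      have hcard' : f'.support.card ≤ N := by
        have h1 := Finset.card_le_card hsupp'
        rw [Finset.card_erase_of_mem hu] at h1
        omega
      have hf'J : f' ∈ J := ih f' hcard' hφf'
      have hfe : f = f' + C (coeff u f) * (monomial u 1 - monomial u' 1) := by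
        rw [hf']; ring
      rw [hfe]
      exact J.add_mem hf'J (J.mul_mem_left _ hbinmem)
    · -- u contains a variable from the set
      push_neg at hW
      set f' := f - monomial u (coeff u f) with hf'
      have hmJ : monomial u (coeff u f) ∈ J := by
        rw [show monomial u (coeff u f) = C (coeff u f) * monomial u (1 : K) by
          rw [C_mul_monomial, mul_one]]
        exact J.mul_mem_left _ (hvar u hW)
      have hφf' : φ f' = 0 := by
        rw [hf', map_sub, show monomial u (coeff u f) = C (coeff u f) * monomial u (1 : K) by
          rw [C_mul_monomial, mul_one], map_mul, hmono0 u hW, mul_zero, sub_zero, hf]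
      have hsupp' : f'.support ⊆ f.support.erase u := by
        intro w hw
        rw [Finset.mem_erase]
        have hwne : coeff w f' ≠ 0 := mem_support_iff.mp hw
        constructor
        · rintro rfl
          apply hwne
          rw [hf', coeff_sub, coeff_monomial, if_pos rfl, sub_self]
        · by_contra hnf
          apply hwne
          have hcwf : coeff w f = 0 := notMem_support_iff.mp hnf
          have hwu : w ≠ u := fun h => hnf (h ▸ hu)
          rw [hf', coeff_sub, coeff_monomial, if_neg (fun h => hwu h.symm), hcwf, sub_zero]
      have hcard' : f'.support.card ≤ N := by
        have h1 := Finset.card_le_card hsupp'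
        rw [Finset.card_erase_of_mem hu] at h1
        omega
      have hf'J : f' ∈ J := ih f' hcard' hφf'
      have hfe : f = f' + monomial u (coeff u f) := by rw [hf']; ring
      rw [hfe]
      exact J.add_mem hf'J hmJ

lemma PW_isPrime (W : Set (ℤ × ℤ)) : (PW K C W).IsPrime := by
  classical
  have hD : ∀ a ∈ subcollW C W, a ∈ C := fun a h => h.1
  set Λ : AddSubgroup (Vx C → ℤ) := cellLattice C (subcollW C W) with hΛ
  -- the quotient group is torsion-free, finitely generated, hence free
  haveI hnz : NoZeroSMulDivisors ℤ ((Vx C → ℤ) ⧸ Λ) := by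
    constructor
    intro n γ h
    by_cases hn : n = 0
    · exact Or.inl hn
    · right
      obtain ⟨y, rfl⟩ := QuotientAddGroup.mk'_surjective Λ γ
      rw [← map_zsmul (QuotientAddGroup.mk' Λ) n y] at h
      have hy : n • y ∈ Λ := (QuotientAddGroup.eq_zero_iff _).mp h
      have : y ∈ Λ := lattice_saturated hD hn hy
      exact (QuotientAddGroup.eq_zero_iff _).mpr this
  haveI hfin : Module.Finite ℤ ((Vx C → ℤ) ⧸ Λ) :=
    Module.Finite.of_surjective ((QuotientAddGroup.mk' Λ).toIntLinearMap)
      (QuotientAddGroup.mk'_surjective Λ)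
  haveI hfree : Module.Free ℤ ((Vx C → ℤ) ⧸ Λ) := Module.free_of_finite_type_torsion_free'
  haveI hus : UniqueSums ((Vx C → ℤ) ⧸ Λ) :=
    ((Module.Free.chooseBasis ℤ ((Vx C → ℤ) ⧸ Λ)).repr.toAddEquiv.uniqueSums_iff).mpr
      inferInstance
  haveI hdom : IsDomain (AddMonoidAlgebra K ((Vx C → ℤ) ⧸ Λ)) :=
    NoZeroDivisors.to_isDomain _
  -- the monomial map
  set gv : Vx C → AddMonoidAlgebra K ((Vx C → ℤ) ⧸ Λ) := fun v =>
    if (v : ℤ × ℤ) ∈ W then 0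
    else AddMonoidAlgebra.single (QuotientAddGroup.mk' Λ (Pi.single v 1)) 1 with hgv
  set φ : MvPolynomial (Vx C) K →ₐ[K] AddMonoidAlgebra K ((Vx C → ℤ) ⧸ Λ) := aeval gv with hφ
  set emb : (Vx C →₀ ℕ) → (Vx C → ℤ) := fun u w => (u w : ℤ) with hemb
  set gsq : (Vx C →₀ ℕ) → ((Vx C → ℤ) ⧸ Λ) := fun u => QuotientAddGroup.mk' Λ (emb u) with hgsq
  have hmono : ∀ u : Vx C →₀ ℕ, (∀ v ∈ u.support, ¬ ((v : ℤ × ℤ) ∈ W)) →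
      φ (monomial u 1) = AddMonoidAlgebra.single (gsq u) 1 := by
    intro u hu
    rw [hφ, aeval_monomial, map_one, one_mul]
    have h1 : (∏ a ∈ u.support, gv a ^ u a) =
        ∏ v ∈ u.support, AddMonoidAlgebra.single
          ((u v) • QuotientAddGroup.mk' Λ (Pi.single v 1)) (1 : K) := by
      refine Finset.prod_congr rfl fun v hv => ?_
      simp only [hgv]
      rw [if_neg (hu v hv), AddMonoidAlgebra.single_pow, one_pow]
    rw [Finsupp.prod, h1, AddMonoidAlgebra.prod_single, Finset.prod_const_one]
    congr 1
    have hembsum : (∑ v ∈ u.support, (u v) • Pi.single v (1 : ℤ)) = emb u := by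
      funext w
      rw [Finset.sum_apply]
      have hterm : ∀ v : Vx C, ((u v • Pi.single v (1 : ℤ) : Vx C → ℤ)) w =
          if w = v then (u v : ℤ) else 0 := by
        intro v
        rw [Pi.smul_apply, Pi.single_apply]
        split_ifs <;> simp
      rw [Finset.sum_congr rfl fun v _ => hterm v]
      rw [Finset.sum_ite_eq u.support w fun v => ((u v : ℤ))]
      split_ifs with h
      · rfl
      · rw [hemb]
        simp [Finsupp.notMem_support_iff.mp h]
    calc (∑ v ∈ u.support, (u v) • QuotientAddGroup.mk' Λ (Pi.single v 1))
        = ∑ v ∈ u.support, QuotientAddGroup.mk' Λ ((u v) • Pi.single v 1) := by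
          exact Finset.sum_congr rfl fun v _ =>
            (map_nsmul (QuotientAddGroup.mk' Λ) (u v) (Pi.single v 1)).symm
      _ = QuotientAddGroup.mk' Λ (∑ v ∈ u.support, (u v) • Pi.single v 1) :=
          (map_sum (QuotientAddGroup.mk' Λ) _ _).symm
      _ = gsq u := by rw [hembsum, hgsq]
  have hmono0 : ∀ u : Vx C →₀ ℕ, (∃ v ∈ u.support, (v : ℤ × ℤ) ∈ W) →
      φ (monomial u 1) = 0 := by
    intro u ⟨v, hv, hvW⟩
    rw [hφ, aeval_monomial, map_one, one_mul]
    rw [Finsupp.prod]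
    refine Finset.prod_eq_zero hv ?_
    simp only [hgv]
    rw [if_pos hvW, zero_pow (Finsupp.mem_support_iff.mp hv)]
  -- PW is contained in the kernel of φ
  have hker1 : PW K C W ≤ RingHom.ker φ := by
    rw [PW, Submodule.add_eq_sup, sup_le_iff]
    constructor
    · rw [Ideal.span_le]
      rintro f ⟨v, hvW, rfl⟩
      rw [SetLike.mem_coe, RingHom.mem_ker]
      show φ (X v) = 0
      rw [hφ, aeval_X]
      simp [hgv, hvW]
    · rw [latticeIdeal_eq, Ideal.span_le]
      rintro f ⟨e, he, rfl⟩
      rw [SetLike.mem_coe, RingHom.mem_ker]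
      show φ (binom K C e) = 0
      have hoff : ∀ g : Vx C →₀ ℕ, (∀ w : Vx C, g w ≠ 0 → e w ≠ 0) →
          (∀ v ∈ g.support, ¬ ((v : ℤ × ℤ) ∈ W)) := by
        intro g hg v hv hvW
        obtain ⟨a, haD, hva⟩ := lattice_support he v (hg v (Finsupp.mem_support_iff.mp hv))
        exact haD.2 v.1 hva hvW
      have hoff1 : ∀ v ∈ (pp C e).support, ¬ ((v : ℤ × ℤ) ∈ W) :=
        hoff _ fun w hw => by rw [pp_apply] at hw; omega
      have hoff2 : ∀ v ∈ (pp C (-e)).support, ¬ ((v : ℤ × ℤ) ∈ W) :=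
        hoff _ fun w hw => by rw [pp_apply] at hw; simp only [Pi.neg_apply] at hw; omega
      rw [binom_eq, map_sub, hmono _ hoff1, hmono _ hoff2]
      have hq : gsq (pp C e) = gsq (pp C (-e)) := by
        rw [hgsq]
        simp only
        rw [QuotientAddGroup.mk'_eq_mk']
        refine ⟨-e, ?_, ?_⟩
        · exact neg_mem he
        · funext w
          rw [hemb]
          simp only [Pi.add_apply, Pi.neg_apply]
          rw [pp_apply, pp_apply]
          simp only [Pi.neg_apply]
          omega
      rw [hq, sub_self]
  -- the kernel of φ is contained in PW
  have hker2 : ∀ f, φ f = 0 → f ∈ PW K C W := by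
    refine ker_le (fun v : Vx C => (v : ℤ × ℤ) ∈ W) gsq (PW K C W) φ hmono hmono0 ?_ ?_
    · -- monomials containing a W-variable
      rintro u ⟨v, hvu, hvW⟩
      have hmul : monomial u (1 : K) = X v * monomial (u - Finsupp.single v 1) 1 := by
        rw [X, monomial_mul, mul_one]
        have huv : u v ≠ 0 := Finsupp.mem_support_iff.mp hvu
        have : Finsupp.single v 1 + (u - Finsupp.single v 1) = u := by
          ext w
          simp only [Finsupp.add_apply, Finsupp.tsub_apply, Finsupp.single_apply]
          split_ifs with h
          · subst h; omega
          · omega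
        rw [this]
      rw [hmul]
      exact Ideal.mul_mem_right _ _ (X_mem_PW v.2 hvW)
    · -- binomial generators
      intro u u' hu hu' hg
      set e : Vx C → ℤ := fun w => (u w : ℤ) - u' w with he
      have heΛ : e ∈ cellLattice C (subcollW C W) := by
        rw [hgsq] at hg
        simp only at hg
        rw [QuotientAddGroup.mk'_eq_mk'] at hg
        obtain ⟨z, hz, hzz⟩ := hg
        have : e = -z := by
          funext w
          have hthis := congrFun hzz w
          simp only [Pi.add_apply, hemb] at hthis
          simp only [he, hemb, Pi.neg_apply]
          omega
        rw [hΛ] at hz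
        rw [this]
        exact neg_mem hz
      set cmin : Vx C →₀ ℕ := Finsupp.equivFunOnFinite.symm (fun w => min (u w) (u' w)) with hcmin
      have hcmin_apply : ∀ w, cmin w = min (u w) (u' w) := fun w =>
        rfl
      have h1 : cmin + pp C e = u := by
        ext w
        rw [Finsupp.add_apply, hcmin_apply, pp_apply, he]
        simp only
        omega
      have h2 : cmin + pp C (-e) = u' := by
        ext w
        rw [Finsupp.add_apply, hcmin_apply, pp_apply]
        simp only [Pi.neg_apply, he]
        omega
      have hfac : monomial u (1 : K) - monomial u' 1 = monomial cmin 1 * binom K C e := by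
        rw [binom_eq, mul_sub, monomial_mul, monomial_mul, one_mul, h1, h2]
      rw [hfac]
      exact Ideal.mul_mem_left _ _ (latticeIdeal_le_PW W (binom_mem_latticeIdeal heΛ))
  have hkereq : PW K C W = RingHom.ker φ :=
    le_antisymm hker1 fun f hf => hker2 f (RingHom.mem_ker.mp hf)
  rw [hkereq]
  exact RingHom.ker_isPrime φ

end Stmt6Aux

open Stmt6Aux

/-- Every minimal prime of `I_adj(𝒞)` is of the form `P_W(𝒞)`
for some admissible set `W` of `𝒞`. -/
theorem stmt_6 (K : Type*) [Field K] (C : Finset (ℤ × ℤ)) (hC : C.Nonempty)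
    (p : Ideal (MvPolynomial {v // v ∈ verts C} K))
    (hp : p ∈ (adjIdeal K C).minimalPrimes) :
    ∃ W : Set (ℤ × ℤ), Admissible C W ∧ p = PW K C W := by
  haveI hPp : p.IsPrime := hp.1.1
  have hIp : adjIdeal K C ≤ p := hp.1.2
  refine ⟨Wset C p, admissible_Wset p hIp, ?_⟩
  have h2 : PW K C (Wset C p) ≤ p := PW_le_p p hIp
  have h1 : adjIdeal K C ≤ PW K C (Wset C p) := adj_le_PW (admissible_Wset p hIp)
  exact le_antisymm (hp.2 ⟨PW_isPrime (Wset C p), h1⟩ h2) h2
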